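/- Let G = G₁ ∪ G₂ be a graph with V(G₁) ∩ V(G₂) = {v}. If J_{G_v} is strongly unmixed, then J_{(G₁)_v} and J_{(G₂)_v} are strongly unmixed. -/

import Mathlib

open SimpleGraph

universe u u'

/-- The number of connected components of the induced subgraph of `G` on the vertex set `A`. -/
noncomputable def cComp {V : Type u} (G : SimpleGraph V) (A : Set V) : ℕ :=
  Nat.card (G.induce A).ConnectedComponent

/-- `x` is a cut vertex of the induced subgraph of `G` on `A`: removing `x`
increases the number of connected components. -/
def CutVertexOn {V : Type u} (G : SimpleGraph V) (A : Set V) (x : V) : Prop :=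
  x ∈ A ∧ cComp G A < cComp G (A \ {x})

/-- `T` is a cutset of the induced subgraph of `G` on `A`: every `t ∈ T` is a
cut vertex of `G[A] ∖ (T ∖ {t})`. -/
def CutsetOn {V : Type u} [DecidableEq V] (G : SimpleGraph V) (A : Set V) (T : Finset V) :
    Prop :=
  ↑T ⊆ A ∧ ∀ t ∈ T, CutVertexOn G (A \ ↑(T.erase t)) t

/-- The binomial edge ideal of the induced subgraph of `G` on `A` is unmixed
(combinatorial characterization): `c(T) = |T| + c(∅)` for every cutset `T`. -/
def UnmixedOn {V : Type u} [DecidableEq V] (G : SimpleGraph V) (A : Set V) : Prop :=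
  ∀ T : Finset V, CutsetOn G A T → cComp G (A \ ↑T) = T.card + cComp G A

/-- The induced subgraph of `G` on `A` is accessible. -/
def AccessibleOn {V : Type u} [DecidableEq V] (G : SimpleGraph V) (A : Set V) : Prop :=
  UnmixedOn G A ∧
    ∀ T : Finset V, CutsetOn G A T → T.Nonempty → ∃ t ∈ T, CutsetOn G A (T.erase t)

/-- The graph `(G[A])_x`: add all edges between neighbours of `x` lying in `A`. -/
def cliqueAtOn {V : Type u} (G : SimpleGraph V) (A : Set V) (x : V) : SimpleGraph V :=
  G ⊔ SimpleGraph.fromRel (fun a b => a ∈ A ∧ b ∈ A ∧ G.Adj x a ∧ G.Adj x b)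

/-- The binomial edge ideal of the induced subgraph of `G` on `A` is strongly unmixed. -/
inductive StronglyUnmixedOn {V : Type u} [DecidableEq V] : SimpleGraph V → Set V → Prop
  | complete (G : SimpleGraph V) (A : Set V)
      (h : ∀ a b : A, (G.induce A).Reachable a b → a ≠ b → (G.induce A).Adj a b) :
      StronglyUnmixedOn G A
  | cut (G : SimpleGraph V) (A : Set V) (hU : UnmixedOn G A) (x : V)
      (hx : CutVertexOn G A x)
      (h1 : StronglyUnmixedOn G (A \ {x}))
      (h2 : StronglyUnmixedOn (cliqueAtOn G A x) A)
      (h3 : StronglyUnmixedOn (cliqueAtOn G A x) (A \ {x})) :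
      StronglyUnmixedOn G A

/-- `x` is a free vertex of `G`: the induced subgraph on `N(x) ∪ {x}` is complete. -/
def FreeVertex {V : Type u} (G : SimpleGraph V) (x : V) : Prop :=
  ∀ a b : V, G.Adj x a → G.Adj x b → a ≠ b → G.Adj a b

/-- Attach a whisker (pendant vertex) at each vertex of `Wv`.  `Sum.inl a` is the
original vertex `a` and `Sum.inr x` is the whisker vertex `f_x` attached at `x ∈ Wv`. -/
def whiskered {V : Type u} (G : SimpleGraph V) (Wv : Set V) : SimpleGraph (V ⊕ V) :=
  SimpleGraph.fromRel (fun a b =>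
    (∃ x y, G.Adj x y ∧ a = Sum.inl x ∧ b = Sum.inl y) ∨
    (∃ x ∈ Wv, a = Sum.inl x ∧ b = Sum.inr x))

/-- `B` is (the vertex set of) a block of `G`: a maximal connected induced
subgraph having no cut vertex. -/
def IsBlock {V : Type u} (G : SimpleGraph V) (B : Set V) : Prop :=
  (G.induce B).Connected ∧ (∀ x, ¬ CutVertexOn G B x) ∧
    ∀ B' : Set V, B ⊆ B' → (G.induce B').Connected → (∀ x, ¬ CutVertexOn G B' x) → B' = B

/-- Glue two graphs `G` and `H`, identifying the vertex `x` of `G` with the vertex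
`y` of `H` (the identified vertex is `Sum.inl x`). -/
def glueAt {V : Type u} {W : Type u'} (G : SimpleGraph V) (H : SimpleGraph W) (x : V) (y : W) :
    SimpleGraph (V ⊕ W) :=
  SimpleGraph.fromRel (fun a b =>
    (∃ p q, G.Adj p q ∧ a = Sum.inl p ∧ b = Sum.inl q) ∨
    (∃ p q, H.Adj p q ∧ p ≠ y ∧ q ≠ y ∧ a = Sum.inr p ∧ b = Sum.inr q) ∨
    (∃ q, H.Adj y q ∧ a = Sum.inl x ∧ b = Sum.inr q))

/-- The star product `K_m ⋆_r K_n`: two complete graphs, on `{x₁,…,x_m}` (the `inl`s)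
and `{y₁,…,y_n}` (the `inr`s), together with the matching edges `{x_i, y_i}` for `1 ≤ i ≤ r`
(indices `0,…,r-1` here). -/
def starProd (m n r : ℕ) : SimpleGraph (Fin m ⊕ Fin n) :=
  SimpleGraph.fromRel (fun a b =>
    (∃ x y : Fin m, a = Sum.inl x ∧ b = Sum.inl y) ∨
    (∃ x y : Fin n, a = Sum.inr x ∧ b = Sum.inr y) ∨
    (∃ (x : Fin m) (y : Fin n), (x : ℕ) = (y : ℕ) ∧ (x : ℕ) < r ∧
      a = Sum.inl x ∧ b = Sum.inr y))

/-- The vertices `x_i, y_i` for `2 ≤ i ≤ r` (indices `1,…,r-1` here), at which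
whiskers are attached to form `overline(K_m ⋆_r K_n)`. -/
def starWhisk (m n r : ℕ) : Set (Fin m ⊕ Fin n) :=
  {a | (∃ x : Fin m, a = Sum.inl x ∧ 1 ≤ (x : ℕ) ∧ (x : ℕ) < r) ∨
       (∃ y : Fin n, a = Sum.inr y ∧ 1 ≤ (y : ℕ) ∧ (y : ℕ) < r)}

/-- `a` and `b` both lie in `A` and are joined by a path of the induced subgraph of `G` on `A`. -/
def ReachIn {V : Type u} (G : SimpleGraph V) (A : Set V) (a b : V) : Prop :=
  ∃ (ha : a ∈ A) (hb : b ∈ A), (G.induce A).Reachable ⟨a, ha⟩ ⟨b, hb⟩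

/-- Auxiliary (connected case): `G[A]` has no cut vertex, or for every cut vertex `x`,
every connected component of `G[A] ∖ {x}` contains at most `r` cut vertices of `G[A] ∖ {x}`. -/
def RCutConnAux {V : Type u} (G : SimpleGraph V) (A : Set V) (r : ℕ) : Prop :=
  (∀ x, ¬ CutVertexOn G A x) ∨
    ∀ x, CutVertexOn G A x → ∀ a ∈ A \ {x},
      Set.ncard {w | CutVertexOn G (A \ {x}) w ∧ ReachIn G (A \ {x}) a w} ≤ r

/-- `G[A]` is `r`-cut-connected: every connected component of `G[A]` satisfies the
condition of `RCutConnAux`. -/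
def RCutConn {V : Type u} (G : SimpleGraph V) (A : Set V) (r : ℕ) : Prop :=
  ∀ a ∈ A, RCutConnAux G {b | ReachIn G A a b} r

/-- `G[A]` is strongly `r`-cut-connected: it is `r`-cut-connected and, recursively,
`G[A] ∖ {x}` is strongly `r`-cut-connected for every cut vertex `x`. -/
inductive StronglyRCutConn {V : Type u} (r : ℕ) : SimpleGraph V → Set V → Prop
  | mk (G : SimpleGraph V) (A : Set V) (h1 : RCutConn G A r)
      (h2 : ∀ x, CutVertexOn G A x → StronglyRCutConn r G (A \ {x})) :
      StronglyRCutConn r G A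

namespace SUGlue

variable {V : Type u} 

/-- Two graphs agree on all pairs from `A`. -/
def EqOn (G G' : SimpleGraph V) (A : Set V) : Prop :=
  ∀ a b, a ∈ A → b ∈ A → (G.Adj a b ↔ G'.Adj a b)

theorem EqOn.refl (G : SimpleGraph V) (A : Set V) : EqOn G G A := fun _ _ _ _ => Iff.rfl

theorem EqOn.symm {G G' : SimpleGraph V} {A : Set V} (h : EqOn G G' A) : EqOn G' G A :=
  fun a b ha hb => (h a b ha hb).symm

theorem EqOn.trans {G G' G'' : SimpleGraph V} {A : Set V} (h : EqOn G G' A)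
    (h' : EqOn G' G'' A) : EqOn G G'' A :=
  fun a b ha hb => (h a b ha hb).trans (h' a b ha hb)

theorem EqOn.mono {G G' : SimpleGraph V} {A B : Set V} (hBA : B ⊆ A) (h : EqOn G G' A) :
    EqOn G G' B := fun a b ha hb => h a b (hBA ha) (hBA hb)

theorem EqOn.induce_eq {G G' : SimpleGraph V} {A : Set V} (h : EqOn G G' A) :
    G.induce A = G'.induce A := by
  ext a b
  exact h a.1 b.1 a.2 b.2

theorem EqOn.cComp_eq {G G' : SimpleGraph V} {A : Set V} (h : EqOn G G' A) :
    cComp G A = cComp G' A := by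
  unfold cComp
  rw [h.induce_eq]

theorem EqOn.cutVertexOn_iff {G G' : SimpleGraph V} {A B : Set V} (hBA : B ⊆ A)
    (h : EqOn G G' A) (x : V) : CutVertexOn G B x ↔ CutVertexOn G' B x := by
  unfold CutVertexOn
  rw [(h.mono hBA).cComp_eq, (h.mono ((Set.diff_subset).trans hBA)).cComp_eq]

theorem EqOn.cutsetOn_iff [DecidableEq V] {G G' : SimpleGraph V} {A B : Set V} (hBA : B ⊆ A)
    (h : EqOn G G' A) (T : Finset V) : CutsetOn G B T ↔ CutsetOn G' B T := by
  unfold CutsetOn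
  refine and_congr Iff.rfl (forall_congr' fun t => forall_congr' fun ht => ?_)
  exact h.cutVertexOn_iff ((Set.diff_subset).trans hBA) t

theorem EqOn.unmixedOn_iff [DecidableEq V] {G G' : SimpleGraph V} {A : Set V}
    (h : EqOn G G' A) : UnmixedOn G A ↔ UnmixedOn G' A := by
  unfold UnmixedOn
  refine forall_congr' fun T => ?_
  rw [h.cutsetOn_iff (le_refl A) T, (h.mono (Set.diff_subset)).cComp_eq, h.cComp_eq]

theorem cliqueAtOn_adj (G : SimpleGraph V) (A : Set V) (x a b : V) :
    (cliqueAtOn G A x).Adj a b ↔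
      G.Adj a b ∨ (a ≠ b ∧ a ∈ A ∧ b ∈ A ∧ G.Adj x a ∧ G.Adj x b) := by
  unfold cliqueAtOn
  rw [SimpleGraph.sup_adj, SimpleGraph.fromRel_adj]
  constructor
  · rintro (h | ⟨hne, (⟨h1, h2, h3, h4⟩ | ⟨h1, h2, h3, h4⟩)⟩)
    · exact Or.inl h
    · exact Or.inr ⟨hne, h1, h2, h3, h4⟩
    · exact Or.inr ⟨hne, h2, h1, h4, h3⟩
  · rintro (h | ⟨hne, h1, h2, h3, h4⟩)
    · exact Or.inl h
    · exact Or.inr ⟨hne, Or.inl ⟨h1, h2, h3, h4⟩⟩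

theorem cliqueAtOn_adj_self (G : SimpleGraph V) (A : Set V) (x a : V) :
    (cliqueAtOn G A x).Adj x a ↔ G.Adj x a := by
  rw [cliqueAtOn_adj]
  constructor
  · rintro (h | ⟨_, _, _, _, h⟩) <;> exact h
  · exact Or.inl

theorem EqOn.cliqueAt {G G' : SimpleGraph V} {A : Set V} (h : EqOn G G' A) {x : V}
    (hx : x ∈ A) : EqOn (cliqueAtOn G A x) (cliqueAtOn G' A x) A := by
  intro a b ha hb
  rw [cliqueAtOn_adj, cliqueAtOn_adj, h a b ha hb]
  constructor
  · rintro (h' | ⟨h1, h2, h3, h4, h5⟩)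
    · exact Or.inl h'
    · exact Or.inr ⟨h1, h2, h3, (h x a hx ha).mp h4, (h x b hx hb).mp h5⟩
  · rintro (h' | ⟨h1, h2, h3, h4, h5⟩)
    · exact Or.inl h'
    · exact Or.inr ⟨h1, h2, h3, (h x a hx ha).mpr h4, (h x b hx hb).mpr h5⟩

/-- Shrinking the clique set: on `B ⊆ A` the graphs `(G[A])_x` and `(G[B])_x` agree. -/
theorem cliqueAtOn_shrink (G : SimpleGraph V) {A B : Set V} (hBA : B ⊆ A) (x : V) :
    EqOn (cliqueAtOn G A x) (cliqueAtOn G B x) B := by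
  intro a b ha hb
  rw [cliqueAtOn_adj, cliqueAtOn_adj]
  constructor
  · rintro (h' | ⟨h1, _, _, h4, h5⟩)
    · exact Or.inl h'
    · exact Or.inr ⟨h1, ha, hb, h4, h5⟩
  · rintro (h' | ⟨h1, _, _, h4, h5⟩)
    · exact Or.inl h'
    · exact Or.inr ⟨h1, hBA ha, hBA hb, h4, h5⟩

theorem EqOn.stronglyUnmixedOn [DecidableEq V] {G : SimpleGraph V} {A : Set V}
    (hsu : StronglyUnmixedOn G A) :
    ∀ G' : SimpleGraph V, EqOn G G' A → StronglyUnmixedOn G' A := by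
  induction hsu with
  | complete G A hc =>
    intro G' h
    exact StronglyUnmixedOn.complete G' A (by rw [← h.induce_eq]; exact hc)
  | cut G A hU x hx h1 h2 h3 ih1 ih2 ih3 =>
    intro G' h
    refine StronglyUnmixedOn.cut G' A (h.unmixedOn_iff.mp hU) x
      ((h.cutVertexOn_iff (le_refl A) x).mp hx) ?_ ?_ ?_
    · exact ih1 G' (h.mono Set.diff_subset)
    · exact ih2 (cliqueAtOn G' A x) (h.cliqueAt hx.1)
    · exact ih3 (cliqueAtOn G' A x) ((h.cliqueAt hx.1).mono Set.diff_subset)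

end SUGlue
namespace SUGlue

variable {V : Type u}

/-- Reachability inside `B`, as a relation on the ambient vertex set. -/
def RG (G : SimpleGraph V) (B : Set V) : V → V → Prop :=
  Relation.ReflTransGen (fun p q => p ∈ B ∧ q ∈ B ∧ G.Adj p q)

theorem RG.refl {G : SimpleGraph V} {B : Set V} (a : V) : RG G B a a :=
  Relation.ReflTransGen.refl

theorem RG.trans {G : SimpleGraph V} {B : Set V} {a b c : V} (h : RG G B a b)
    (h' : RG G B b c) : RG G B a c := Relation.ReflTransGen.trans h h'

theorem RG.mono_graph {G G' : SimpleGraph V} {B : Set V} (h : ∀ p q, p ∈ B → q ∈ B →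
    G.Adj p q → G'.Adj p q) {a b : V} (hr : RG G B a b) : RG G' B a b := by
  induction hr with
  | refl => exact RG.refl a
  | tail _ hstep ih =>
    exact Relation.ReflTransGen.tail ih ⟨hstep.1, hstep.2.1, h _ _ hstep.1 hstep.2.1 hstep.2.2⟩

theorem reachable_of_rg {G : SimpleGraph V} {B : Set V} {a b : V} (h : RG G B a b)
    (ha : a ∈ B) (hb : b ∈ B) : (G.induce B).Reachable ⟨a, ha⟩ ⟨b, hb⟩ := by
  induction h with
  | refl => rfl
  | @tail c d _ hstep ih =>
    exact (ih hstep.1).trans (SimpleGraph.Adj.reachable (by exact hstep.2.2))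

theorem rg_of_reachable {G : SimpleGraph V} {B : Set V} :
    ∀ {x y : ↥B}, (G.induce B).Reachable x y → RG G B x.1 y.1 := by
  intro x y h
  obtain ⟨w⟩ := h
  induction w with
  | nil => exact RG.refl _
  | @cons p q r hadj _ ih =>
    exact Relation.ReflTransGen.head ⟨p.2, q.2, hadj⟩ ih

theorem connectedComponentMk_eq_iff_rg {G : SimpleGraph V} {B : Set V} {a b : V}
    (ha : a ∈ B) (hb : b ∈ B) :
    (G.induce B).connectedComponentMk ⟨a, ha⟩ = (G.induce B).connectedComponentMk ⟨b, hb⟩ ↔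
      RG G B a b := by
  rw [SimpleGraph.ConnectedComponent.eq]
  exact ⟨fun h => rg_of_reachable h, fun h => reachable_of_rg h ha hb⟩

/-- If `v` is simplicial inside `B`, any two vertices of `B \ {v}` connected in `B`
are connected in `B \ {v}`. -/
theorem rg_diff_of_simplicial {G : SimpleGraph V} {B : Set V} {v : V}
    (hsimp : ∀ a b, a ∈ B → b ∈ B → G.Adj v a → G.Adj v b → a ≠ b → G.Adj a b)
    {b : V} (hb : b ≠ v) :
    ∀ {a : V}, RG G B a b → a ≠ v → RG G (B \ {v}) a b := by
  have main : ∀ {a : V}, RG G B a b →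
      (a ≠ v → RG G (B \ {v}) a b) ∧
      (a = v → ∀ a', a' ∈ B → a' ≠ v → G.Adj v a' → RG G (B \ {v}) a' b) := by
    intro a h
    induction h using Relation.ReflTransGen.head_induction_on with
    | refl =>
      refine ⟨fun _ => RG.refl b, fun hav => ?_⟩
      exact absurd hav.symm (by exact fun h => hb h.symm)
    | @head p q hstep _ ih =>
      obtain ⟨hpB, hqB, hadj⟩ := hstep
      constructor
      · intro hpv
        by_cases hqv : q = v
        · subst hqv
          exact ih.2 rfl p hpB hpv (hadj.symm)
        · exact Relation.ReflTransGen.head ⟨⟨hpB, hpv⟩, ⟨hqB, hqv⟩, hadj⟩ (ih.1 hqv)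
      · intro hpv a' ha'B ha'v hva'
        have hadj' : G.Adj v q := hpv ▸ hadj
        have hqv : q ≠ v := fun h => (G.loopless.irrefl v) (h ▸ hadj')
        have hq : RG G (B \ {v}) q b := ih.1 hqv
        by_cases haq : a' = q
        · exact haq ▸ hq
        · exact Relation.ReflTransGen.head
            ⟨⟨ha'B, ha'v⟩, ⟨hqB, hqv⟩, hsimp a' q ha'B hqB hva' hadj' haq⟩ hq
  intro a h ha
  exact (main h).1 ha

theorem not_cutVertexOn_of_simplicial [Fintype V] {G : SimpleGraph V} {B : Set V} {v : V}
    (hsimp : ∀ a b, a ∈ B → b ∈ B → G.Adj v a → G.Adj v b → a ≠ b → G.Adj a b) :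
    ¬ CutVertexOn G B v := by
  rintro ⟨hvB, hlt⟩
  have hsub : B \ {v} ⊆ B := Set.diff_subset
  let f : (G.induce (B \ {v})).ConnectedComponent → (G.induce B).ConnectedComponent :=
    SimpleGraph.ConnectedComponent.map
      ⟨fun p => ⟨p.1, hsub p.2⟩, fun h => by exact h⟩
  have hinj : Function.Injective f := by
    intro c c'
    refine SimpleGraph.ConnectedComponent.ind₂ (fun p q h => ?_) c c'
    simp only [f, SimpleGraph.ConnectedComponent.map_mk] at h
    have h1 : RG G B p.1 q.1 := by
      rw [← connectedComponentMk_eq_iff_rg (hsub p.2) (hsub q.2)]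
      exact h
    have h2 : RG G (B \ {v}) p.1 q.1 :=
      rg_diff_of_simplicial hsimp q.2.2 h1 p.2.2
    rw [SimpleGraph.ConnectedComponent.eq]
    exact reachable_of_rg h2 p.2 q.2
  have := Nat.card_le_card_of_injective f hinj
  unfold cComp at hlt
  omega

end SUGlue
namespace SUGlue

variable {V : Type u}

section Glue

variable {G : SimpleGraph V} {B₁ B₂ : Set V} {v : V}

/-- one step inside `B₁` or inside `B₂` -/
def EStep (G : SimpleGraph V) (B₁ B₂ : Set V) (p q : V) : Prop :=
  (p ∈ B₁ ∧ q ∈ B₁ ∧ G.Adj p q) ∨ (p ∈ B₂ ∧ q ∈ B₂ ∧ G.Adj p q)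

def BB (B₁ B₂ : Set V) : Bool → Set V := fun i => if i then B₁ else B₂

theorem estep_of_rg (hv₁ : v ∈ B₁) (hv₂ : v ∈ B₂)
    (hcross : ∀ p q, p ∈ B₁ → q ∈ B₂ → p ∉ B₂ → q ∉ B₁ → G.Adj p q →
      G.Adj p v ∧ G.Adj v q)
    {a b : V} (h : RG G (B₁ ∪ B₂) a b) :
    Relation.ReflTransGen (EStep G B₁ B₂) a b := by
  induction h with
  | refl => exact Relation.ReflTransGen.refl
  | @tail c d _ hstep ih =>
    obtain ⟨hc, hd, hadj⟩ := hstep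
    refine Relation.ReflTransGen.trans ih ?_
    by_cases hc1 : c ∈ B₁
    · by_cases hd1 : d ∈ B₁
      · exact Relation.ReflTransGen.single (Or.inl ⟨hc1, hd1, hadj⟩)
      · have hd2 : d ∈ B₂ := hd.resolve_left hd1
        by_cases hc2 : c ∈ B₂
        · exact Relation.ReflTransGen.single (Or.inr ⟨hc2, hd2, hadj⟩)
        · obtain ⟨h1, h2⟩ := hcross c d hc1 hd2 hc2 hd1 hadj
          exact Relation.ReflTransGen.head (Or.inl ⟨hc1, hv₁, h1⟩)
            (Relation.ReflTransGen.single (Or.inr ⟨hv₂, hd2, h2⟩))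
    · have hc2 : c ∈ B₂ := hc.resolve_left hc1
      by_cases hd2 : d ∈ B₂
      · exact Relation.ReflTransGen.single (Or.inr ⟨hc2, hd2, hadj⟩)
      · have hd1 : d ∈ B₁ := hd.resolve_right hd2
        obtain ⟨h1, h2⟩ := hcross d c hd1 hc2 hd2 hc1 hadj.symm
        exact Relation.ReflTransGen.head (Or.inr ⟨hc2, hv₂, h2.symm⟩)
          (Relation.ReflTransGen.single (Or.inl ⟨hv₁, hd1, h1.symm⟩))

theorem glue_master (hv₁ : v ∈ B₁) (hv₂ : v ∈ B₂)
    (hside : ∀ x, x ∈ B₁ → x ∈ B₂ → x = v) {a b : V}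
    (h : Relation.ReflTransGen (EStep G B₁ B₂) a b) :
    ∀ i j : Bool, a ∈ BB B₁ B₂ i → b ∈ BB B₁ B₂ j →
      ((i = j ∧ RG G (BB B₁ B₂ i) a b) ∨
        (RG G (BB B₁ B₂ i) a v ∧ RG G (BB B₁ B₂ j) v b)) := by
  have hvBB : ∀ m : Bool, v ∈ BB B₁ B₂ m := by
    intro m; rcases m with _ | _
    · exact hv₂
    · exact hv₁
  have hsideBB : ∀ (x : V) (i j : Bool), i ≠ j → x ∈ BB B₁ B₂ i → x ∈ BB B₁ B₂ j → x = v := by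
    intro x i j hij hxi hxj
    rcases i with _ | _ <;> rcases j with _ | _
    · exact absurd rfl hij
    · exact hside x hxj hxi
    · exact hside x hxi hxj
    · exact absurd rfl hij
  induction h using Relation.ReflTransGen.head_induction_on with
  | refl =>
    intro i j hbi hbj
    by_cases hij : i = j
    · exact Or.inl ⟨hij, RG.refl b⟩
    · have hbv : b = v := hsideBB b i j hij hbi hbj
      rw [hbv]
      exact Or.inr ⟨RG.refl v, RG.refl v⟩
  | @head p q hstep htail ih =>
    intro i j hpi hbj
    have hk : ∃ k : Bool, p ∈ BB B₁ B₂ k ∧ q ∈ BB B₁ B₂ k ∧ G.Adj p q := by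
      rcases hstep with ⟨h1, h2, h3⟩ | ⟨h1, h2, h3⟩
      · exact ⟨true, h1, h2, h3⟩
      · exact ⟨false, h1, h2, h3⟩
    obtain ⟨k, hpk, hqk, hadj⟩ := hk
    by_cases hik : i = k
    · subst hik
      rcases ih i j hqk hbj with ⟨hij, hr⟩ | ⟨hr1, hr2⟩
      · exact Or.inl ⟨hij, Relation.ReflTransGen.head ⟨hpi, hqk, hadj⟩ hr⟩
      · exact Or.inr ⟨Relation.ReflTransGen.head ⟨hpi, hqk, hadj⟩ hr1, hr2⟩
    · have hpv : p = v := hsideBB p i k hik hpi hpk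
      have hvq : G.Adj v q := hpv ▸ hadj
      rw [hpv]
      rcases ih k j hqk hbj with ⟨hkj, hr⟩ | ⟨hr1, hr2⟩
      · subst hkj
        exact Or.inr ⟨RG.refl v, Relation.ReflTransGen.head ⟨hvBB k, hqk, hvq⟩ hr⟩
      · exact Or.inr ⟨RG.refl v, hr2⟩

end Glue

end SUGlue
namespace SUGlue

variable {V : Type u}

@[simp] theorem BB_true (B₁ B₂ : Set V) : BB B₁ B₂ true = B₁ := rfl
@[simp] theorem BB_false (B₁ B₂ : Set V) : BB B₁ B₂ false = B₂ := rfl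

theorem cComp_glue [Fintype V] {G : SimpleGraph V} {B₁ B₂ : Set V} {v : V}
    (hv₁ : v ∈ B₁) (hv₂ : v ∈ B₂) (hside : ∀ x, x ∈ B₁ → x ∈ B₂ → x = v)
    (hcross : ∀ p q, p ∈ B₁ → q ∈ B₂ → p ∉ B₂ → q ∉ B₁ → G.Adj p q →
      G.Adj p v ∧ G.Adj v q) :
    cComp G (B₁ ∪ B₂) + 1 = cComp G B₁ + cComp G B₂ := by
  classical
  set B : Set V := B₁ ∪ B₂ with hBdef
  have hQ : ∀ (a b : V) (i j : Bool), a ∈ BB B₁ B₂ i → b ∈ BB B₁ B₂ j → RG G B a b →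
      ((i = j ∧ RG G (BB B₁ B₂ i) a b) ∨
        (RG G (BB B₁ B₂ i) a v ∧ RG G (BB B₁ B₂ j) v b)) :=
    fun a b i j hai hbj h =>
      glue_master hv₁ hv₂ hside (estep_of_rg hv₁ hv₂ hcross h) i j hai hbj
  let ι₁ : G.induce B₁ →g G.induce B := ⟨fun p => ⟨p.1, Or.inl p.2⟩, fun {p q} h => by exact h⟩
  let ι₂ : G.induce B₂ →g G.induce B := ⟨fun p => ⟨p.1, Or.inr p.2⟩, fun {p q} h => by exact h⟩
  let f₁ := SimpleGraph.ConnectedComponent.map ι₁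
  let f₂ := SimpleGraph.ConnectedComponent.map ι₂
  let v₂ : (G.induce B₂).ConnectedComponent := (G.induce B₂).connectedComponentMk ⟨v, hv₂⟩
  let v₁ : (G.induce B₁).ConnectedComponent := (G.induce B₁).connectedComponentMk ⟨v, hv₁⟩
  have hrg : ∀ (a b : V) (ha : a ∈ B) (hb : b ∈ B),
      (G.induce B).connectedComponentMk ⟨a, ha⟩ = (G.induce B).connectedComponentMk ⟨b, hb⟩ →
      RG G B a b := fun a b ha hb h => (connectedComponentMk_eq_iff_rg ha hb).mp h
  have hinj₁ : Function.Injective f₁ := by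
    intro c c'
    refine SimpleGraph.ConnectedComponent.ind₂ (fun p q h => ?_) c c'
    have h1 : RG G B p.1 q.1 := hrg _ _ _ _ h
    have h2 : RG G B₁ p.1 q.1 := by
      rcases hQ p.1 q.1 true true p.2 q.2 h1 with ⟨_, hr⟩ | ⟨hr1, hr2⟩
      · exact hr
      · exact hr1.trans hr2
    exact (connectedComponentMk_eq_iff_rg p.2 q.2).mpr h2
  have hinj₂ : Function.Injective f₂ := by
    intro c c'
    refine SimpleGraph.ConnectedComponent.ind₂ (fun p q h => ?_) c c'
    have h1 : RG G B p.1 q.1 := hrg _ _ _ _ h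
    have h2 : RG G B₂ p.1 q.1 := by
      rcases hQ p.1 q.1 false false p.2 q.2 h1 with ⟨_, hr⟩ | ⟨hr1, hr2⟩
      · exact hr
      · exact hr1.trans hr2
    exact (connectedComponentMk_eq_iff_rg p.2 q.2).mpr h2
  have hmix : ∀ (c : (G.induce B₁).ConnectedComponent) (c' : (G.induce B₂).ConnectedComponent),
      f₁ c = f₂ c' → c' = v₂ := by
    intro c c'
    refine SimpleGraph.ConnectedComponent.ind (fun p => ?_) c
    refine SimpleGraph.ConnectedComponent.ind (fun q => ?_) c'
    intro h
    have h1 : RG G B p.1 q.1 := hrg _ _ _ _ h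
    rcases hQ p.1 q.1 true false p.2 q.2 h1 with ⟨htf, _⟩ | ⟨_, hr2⟩
    · exact absurd htf (by simp)
    · exact ((connectedComponentMk_eq_iff_rg hv₂ q.2).mpr hr2).symm
  -- the gluing bijection
  let F : (G.induce B₁).ConnectedComponent ⊕
      {c : (G.induce B₂).ConnectedComponent // ¬ c = v₂} → (G.induce B).ConnectedComponent :=
    Sum.elim f₁ (fun c => f₂ c.1)
  have hv₁₂ : f₁ v₁ = f₂ v₂ := rfl
  have hFinj : Function.Injective F := by
    rintro (c | ⟨c, hc⟩) (c' | ⟨c', hc'⟩) h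
    · rw [hinj₁ h]
    · exact absurd (hmix c c' h) hc'
    · exact absurd (hmix c' c h.symm) hc
    · rw [Subtype.ext (hinj₂ h)]
  have hFsurj : Function.Surjective F := by
    intro c
    refine SimpleGraph.ConnectedComponent.ind (fun p => ?_) c
    rcases p with ⟨x, hx⟩
    rcases hx with hx1 | hx2
    · exact ⟨Sum.inl ((G.induce B₁).connectedComponentMk ⟨x, hx1⟩), rfl⟩
    · by_cases hc : (G.induce B₂).connectedComponentMk ⟨x, hx2⟩ = v₂
      · refine ⟨Sum.inl v₁, ?_⟩
        have : f₂ ((G.induce B₂).connectedComponentMk ⟨x, hx2⟩) = f₂ v₂ := congrArg f₂ hc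
        calc F (Sum.inl v₁) = f₂ v₂ := hv₁₂
        _ = f₂ ((G.induce B₂).connectedComponentMk ⟨x, hx2⟩) := this.symm
        _ = (G.induce B).connectedComponentMk ⟨x, Or.inr hx2⟩ := rfl
      · exact ⟨Sum.inr ⟨(G.induce B₂).connectedComponentMk ⟨x, hx2⟩, hc⟩, rfl⟩
  have hcard : Nat.card (G.induce B).ConnectedComponent =
      Nat.card ((G.induce B₁).ConnectedComponent ⊕
        {c : (G.induce B₂).ConnectedComponent // ¬ c = v₂}) :=
    (Nat.card_congr (Equiv.ofBijective F ⟨hFinj, hFsurj⟩)).symm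
  rw [Nat.card_sum] at hcard
  have hcard₂ : Nat.card (G.induce B₂).ConnectedComponent =
      Nat.card {c : (G.induce B₂).ConnectedComponent // c = v₂} +
      Nat.card {c : (G.induce B₂).ConnectedComponent // ¬ c = v₂} := by
    rw [← Nat.card_sum]
    exact (Nat.card_congr (Equiv.sumCompl (· = v₂))).symm
  have hone : Nat.card {c : (G.induce B₂).ConnectedComponent // c = v₂} = 1 := by
    have e : {c : (G.induce B₂).ConnectedComponent // c = v₂} ≃ PUnit.{1} :=
      ⟨fun _ => PUnit.unit, fun _ => ⟨v₂, rfl⟩,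
        fun x => Subtype.ext x.2.symm, fun _ => rfl⟩
    rw [Nat.card_congr e]
    simp
  unfold cComp
  omega

end SUGlue
namespace SUGlue

variable {V : Type u}

theorem simplicial_cliqueAtOn {G : SimpleGraph V} {A B : Set V} {v : V} (hBA : B ⊆ A) :
    ∀ a b, a ∈ B → b ∈ B → (cliqueAtOn G A v).Adj v a → (cliqueAtOn G A v).Adj v b →
      a ≠ b → (cliqueAtOn G A v).Adj a b := by
  intro a b ha hb hva hvb hab
  rw [cliqueAtOn_adj_self] at hva hvb
  exact (cliqueAtOn_adj G A v a b).mpr (Or.inr ⟨hab, hBA ha, hBA hb, hva, hvb⟩)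

theorem not_cutVertexOn_cliqueAtOn [Fintype V] {G : SimpleGraph V} {A B : Set V} {v : V}
    (hBA : B ⊆ A) : ¬ CutVertexOn (cliqueAtOn G A v) B v :=
  not_cutVertexOn_of_simplicial (simplicial_cliqueAtOn hBA)

section Transfer

variable [Fintype V] [DecidableEq V] {G : SimpleGraph V} {A A₁ A₂ : Set V} {v : V}
variable (hA : A₁ ∪ A₂ = A) (hI : A₁ ∩ A₂ = {v})
variable (hedge : ∀ a b, a ∈ A → b ∈ A → G.Adj a b → (a ∈ A₁ ∧ b ∈ A₁) ∨ (a ∈ A₂ ∧ b ∈ A₂))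

include hA hI hedge

theorem glue_formula (S : Set V) (hS : S ⊆ A₁ \ {v}) :
    cComp (cliqueAtOn G A v) (A \ S) + 1 =
      cComp (cliqueAtOn G A v) (A₁ \ S) + cComp (cliqueAtOn G A v) A₂ := by
  have hv₁ : v ∈ A₁ := by
    have : v ∈ A₁ ∩ A₂ := hI ▸ rfl
    exact this.1
  have hv₂ : v ∈ A₂ := by
    have : v ∈ A₁ ∩ A₂ := hI ▸ rfl
    exact this.2
  have hside : ∀ x, x ∈ A₁ → x ∈ A₂ → x = v := by
    intro x h1 h2
    have : x ∈ A₁ ∩ A₂ := ⟨h1, h2⟩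
    rwa [hI] at this
  have hsub₁ : A₁ ⊆ A := hA ▸ Set.subset_union_left
  have hsub₂ : A₂ ⊆ A := hA ▸ Set.subset_union_right
  have hSA₂ : ∀ s, s ∈ S → s ∉ A₂ := by
    intro s hs hs2
    exact (hS hs).2 (hside s (hS hs).1 hs2)
  have hU : (A₁ \ S) ∪ A₂ = A \ S := by
    rw [← hA]
    ext x
    constructor
    · rintro (⟨h1, h2⟩ | h2)
      · exact ⟨Or.inl h1, h2⟩
      · exact ⟨Or.inr h2, fun hxS => hSA₂ x hxS h2⟩
    · rintro ⟨h1 | h1, h2⟩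
      · exact Or.inl ⟨h1, h2⟩
      · exact Or.inr h1
  have hv₁' : v ∈ A₁ \ S := ⟨hv₁, fun hvS => (hS hvS).2 rfl⟩
  have hcross : ∀ p q, p ∈ A₁ \ S → q ∈ A₂ → p ∉ A₂ → q ∉ A₁ \ S →
      (cliqueAtOn G A v).Adj p q →
      (cliqueAtOn G A v).Adj p v ∧ (cliqueAtOn G A v).Adj v q := by
    intro p q hp hq hp2 hq1 hadj
    rw [cliqueAtOn_adj] at hadj
    have hpA : p ∈ A := hsub₁ hp.1
    have hqA : q ∈ A := hsub₂ hq
    rcases hadj with h | ⟨_, _, _, h1, h2⟩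
    · rcases hedge p q hpA hqA h with ⟨_, hqq⟩ | ⟨hpp, _⟩
      · -- q ∈ A₁ but q ∉ A₁ \ S, so q ∈ S, contradicting q ∈ A₂
        by_cases hqS : q ∈ S
        · exact absurd hq (hSA₂ q hqS)
        · exact absurd ⟨hqq, hqS⟩ hq1
      · exact absurd hpp hp2
    · constructor
      · exact SimpleGraph.sup_adj .. |>.mpr (Or.inl h1.symm) |> fun h => h
      · exact SimpleGraph.sup_adj .. |>.mpr (Or.inl h2) |> fun h => h
  have hform := cComp_glue (G := cliqueAtOn G A v) hv₁' hv₂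
    (fun x hx1 hx2 => hside x hx1.1 hx2) hcross
  rwa [hU] at hform

theorem cutVertexOn_glue_iff (S : Set V) (hS : S ⊆ A₁ \ {v}) (t : V) (ht₁ : t ∈ A₁)
    (htv : t ≠ v) (htS : t ∉ S) :
    CutVertexOn (cliqueAtOn G A v) (A \ S) t ↔
      CutVertexOn (cliqueAtOn G A v) (A₁ \ S) t := by
  have h1 := glue_formula hA hI hedge S hS
  have h2 := glue_formula hA hI hedge (S ∪ {t})
    (Set.union_subset hS (by simpa using ⟨ht₁, htv⟩))
  rw [← Set.diff_diff] at h2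
  rw [← Set.diff_diff] at h2
  unfold CutVertexOn
  have htA : t ∈ A := (hA ▸ Set.subset_union_left) ht₁
  constructor
  · rintro ⟨hmem, hlt⟩
    exact ⟨⟨ht₁, htS⟩, by omega⟩
  · rintro ⟨hmem, hlt⟩
    exact ⟨⟨htA, htS⟩, by omega⟩

theorem cutsetOn_glue (T : Finset V) (hT : CutsetOn (cliqueAtOn G A₁ v) A₁ T) :
    CutsetOn (cliqueAtOn G A v) A T ∧ ↑T ⊆ A₁ \ {v} := by
  have hsub₁ : A₁ ⊆ A := hA ▸ Set.subset_union_left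
  have hEq : EqOn (cliqueAtOn G A v) (cliqueAtOn G A₁ v) A₁ := cliqueAtOn_shrink G hsub₁ v
  have hvT : v ∉ T := by
    intro hvT
    have := hT.2 v hvT
    exact not_cutVertexOn_cliqueAtOn (A := A₁) (Set.diff_subset) this
  have hTsub : ↑T ⊆ A₁ \ {v} := by
    intro t ht
    have ht' : t ∈ T := by simpa using ht
    refine ⟨hT.1 ht, fun htv => ?_⟩
    have : t = v := htv
    exact hvT (this ▸ ht')
  refine ⟨⟨hT.1.trans hsub₁, fun t ht => ?_⟩, hTsub⟩
  have hc₁ : CutVertexOn (cliqueAtOn G A₁ v) (A₁ \ ↑(T.erase t)) t := hT.2 t ht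
  have hc₂ : CutVertexOn (cliqueAtOn G A v) (A₁ \ ↑(T.erase t)) t :=
    (hEq.cutVertexOn_iff Set.diff_subset t).mpr hc₁
  have hS : (↑(T.erase t) : Set V) ⊆ A₁ \ {v} := by
    intro s hs
    have hs0 : s ∈ T ∧ ¬ s = t := by simpa using hs
    have hs' : s ∈ T.erase t := Finset.mem_erase.mpr ⟨hs0.2, hs0.1⟩
    exact hTsub (by simpa using Finset.mem_of_mem_erase hs')
  have htT : t ∈ (↑T : Set V) := by simpa using ht
  refine (cutVertexOn_glue_iff hA hI hedge _ hS t (hTsub htT).1 (hTsub htT).2 ?_).mpr hc₂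
  simp

theorem unmixedOn_glue (hU : UnmixedOn (cliqueAtOn G A v) A) :
    UnmixedOn (cliqueAtOn G A₁ v) A₁ := by
  have hsub₁ : A₁ ⊆ A := hA ▸ Set.subset_union_left
  have hEq : EqOn (cliqueAtOn G A v) (cliqueAtOn G A₁ v) A₁ := cliqueAtOn_shrink G hsub₁ v
  intro T hT
  obtain ⟨hTA, hTsub⟩ := cutsetOn_glue hA hI hedge T hT
  have h0 := hU T hTA
  have h1 := glue_formula hA hI hedge (↑T) hTsub
  have h2 := glue_formula hA hI hedge ∅ (Set.empty_subset _)
  rw [Set.diff_empty, Set.diff_empty] at h2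
  rw [← (hEq.mono Set.diff_subset).cComp_eq, ← hEq.cComp_eq]
  omega

theorem cutVertexOn_glue' (x : V) (hx₁ : x ∈ A₁) (hxv : x ≠ v)
    (hx : CutVertexOn (cliqueAtOn G A v) A x) :
    CutVertexOn (cliqueAtOn G A₁ v) A₁ x := by
  have hsub₁ : A₁ ⊆ A := hA ▸ Set.subset_union_left
  have hEq : EqOn (cliqueAtOn G A v) (cliqueAtOn G A₁ v) A₁ := cliqueAtOn_shrink G hsub₁ v
  have h := (cutVertexOn_glue_iff hA hI hedge ∅ (Set.empty_subset _) x hx₁ hxv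
    (Set.notMem_empty x)).mp (by rwa [Set.diff_empty])
  rw [Set.diff_empty] at h
  exact (hEq.cutVertexOn_iff (le_refl A₁) x).mp h

end Transfer

end SUGlue
namespace SUGlue

variable {V : Type u}

/-- The auxiliary graph `G''`: `(G_v)_x` on the `A₁` side, `G` on the `A₂` side. -/
def Gaux (G : SimpleGraph V) (A A₁ A₂ : Set V) (v x : V) : SimpleGraph V :=
  SimpleGraph.fromRel (fun a b =>
    (a ∈ A₁ ∧ b ∈ A₁ ∧ (cliqueAtOn (cliqueAtOn G A v) A x).Adj a b) ∨
    (a ∈ A₂ ∧ b ∈ A₂ ∧ G.Adj a b))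

theorem gaux_adj (G : SimpleGraph V) (A A₁ A₂ : Set V) (v x a b : V) :
    (Gaux G A A₁ A₂ v x).Adj a b ↔ a ≠ b ∧
      ((a ∈ A₁ ∧ b ∈ A₁ ∧ (cliqueAtOn (cliqueAtOn G A v) A x).Adj a b) ∨
        (a ∈ A₂ ∧ b ∈ A₂ ∧ G.Adj a b)) := by
  unfold Gaux
  rw [SimpleGraph.fromRel_adj]
  constructor
  · rintro ⟨hne, (⟨h1, h2, h3⟩ | ⟨h1, h2, h3⟩) | (⟨h1, h2, h3⟩ | ⟨h1, h2, h3⟩)⟩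
    · exact ⟨hne, Or.inl ⟨h1, h2, h3⟩⟩
    · exact ⟨hne, Or.inr ⟨h1, h2, h3⟩⟩
    · exact ⟨hne, Or.inl ⟨h2, h1, h3.symm⟩⟩
    · exact ⟨hne, Or.inr ⟨h2, h1, h3.symm⟩⟩
  · rintro ⟨hne, h⟩
    exact ⟨hne, Or.inl h⟩

section KeyEq

variable [Fintype V] [DecidableEq V] {G : SimpleGraph V} {A A₁ A₂ : Set V} {v x : V}
variable (hA : A₁ ∪ A₂ = A) (hI : A₁ ∩ A₂ = {v})
variable (hedge : ∀ a b, a ∈ A → b ∈ A → G.Adj a b → (a ∈ A₁ ∧ b ∈ A₁) ∨ (a ∈ A₂ ∧ b ∈ A₂))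
variable (hx₁ : x ∈ A₁) (hxv : x ≠ v)

-- abbreviations (local notation)
local notation "Γ" => cliqueAtOn G A v
local notation "Γx" => cliqueAtOn (cliqueAtOn G A v) A x
local notation "G₂" => Gaux G A A₁ A₂ v x

include hI in
theorem hv₁' : v ∈ A₁ := by
  have : v ∈ A₁ ∩ A₂ := hI ▸ rfl
  exact this.1

include hI in
theorem hv₂' : v ∈ A₂ := by
  have : v ∈ A₁ ∩ A₂ := hI ▸ rfl
  exact this.2

include hI in
theorem hside' : ∀ y, y ∈ A₁ → y ∈ A₂ → y = v := by
  intro y h1 h2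
  have : y ∈ A₁ ∩ A₂ := ⟨h1, h2⟩
  rwa [hI] at this

include hA hI in
/-- `Γ_x`-adjacency to `v`. -/
theorem gammax_adj_v (a : V) (ha : a ∈ A) :
    (cliqueAtOn (cliqueAtOn G A v) A x).Adj v a ↔
      v ≠ a ∧ (G.Adj v a ∨ (G.Adj v x ∧ (cliqueAtOn G A v).Adj x a)) := by
  have hvA : v ∈ A := (hA ▸ Set.subset_union_left : A₁ ⊆ A) (hv₁' hI)
  rw [cliqueAtOn_adj]
  constructor
  · rintro (h | ⟨hne, _, _, h1, h2⟩)
    · exact ⟨h.ne, Or.inl ((cliqueAtOn_adj_self G A v a).mp h)⟩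
    · exact ⟨hne, Or.inr ⟨(cliqueAtOn_adj_self G A v x).mp h1.symm, h2⟩⟩
  · rintro ⟨hne, h | ⟨h1, h2⟩⟩
    · exact Or.inl ((cliqueAtOn_adj_self G A v a).mpr h)
    · exact Or.inr ⟨hne, hvA, ha, ((cliqueAtOn_adj_self G A v x).mpr h1).symm, h2⟩


include hA hI hx₁ in
/-- `v` remains simplicial in `Γ_x` (within `A`). -/
theorem svx (a b : V) (ha : a ∈ A) (hb : b ∈ A)
    (hva : (cliqueAtOn (cliqueAtOn G A v) A x).Adj v a)
    (hvb : (cliqueAtOn (cliqueAtOn G A v) A x).Adj v b) (hab : a ≠ b) :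
    (cliqueAtOn (cliqueAtOn G A v) A x).Adj a b := by
  have hvA : v ∈ A := (hA ▸ Set.subset_union_left : A₁ ⊆ A) (hv₁' hI)
  obtain ⟨hnea, ha'⟩ := (gammax_adj_v hA hI a ha).mp hva
  obtain ⟨hneb, hb'⟩ := (gammax_adj_v hA hI b hb).mp hvb
  have hxA : x ∈ A := (hA ▸ Set.subset_union_left : A₁ ⊆ A) hx₁
  have liftG : ∀ p q : V, (cliqueAtOn G A v).Adj p q →
      (cliqueAtOn (cliqueAtOn G A v) A x).Adj p q := fun p q h =>
    (SimpleGraph.sup_adj ..).mpr (Or.inl h)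
  have hclqv : ∀ p q : V, p ∈ A → q ∈ A → p ≠ q → G.Adj v p → G.Adj v q →
      (cliqueAtOn G A v).Adj p q := fun p q hp hq hne h1 h2 =>
    (cliqueAtOn_adj G A v p q).mpr (Or.inr ⟨hne, hp, hq, h1, h2⟩)
  rcases ha' with hva' | ⟨hvx, hxa⟩ <;> rcases hb' with hvb' | ⟨hvx', hxb⟩
  · exact liftG a b (hclqv a b ha hb hab hva' hvb')
  · -- G.Adj v a ; Γ.Adj x b
    by_cases hax : a = x
    · exact liftG a b (hax ▸ hxb)
    · have hxa' : (cliqueAtOn G A v).Adj x a :=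
        hclqv x a hxA ha (fun h => hax h.symm) hvx' hva'
      exact (cliqueAtOn_adj ..).mpr (Or.inr ⟨hab, ha, hb, hxa', hxb⟩)
  · by_cases hbx : b = x
    · exact liftG a b (hbx ▸ hxa.symm)
    · have hxb' : (cliqueAtOn G A v).Adj x b :=
        hclqv x b hxA hb (fun h => hbx h.symm) hvx hvb'
      exact (cliqueAtOn_adj ..).mpr (Or.inr ⟨hab, ha, hb, hxa, hxb'⟩)
  · exact (cliqueAtOn_adj ..).mpr (Or.inr ⟨hab, ha, hb, hxa, hxb⟩)

include hA hI hedge hx₁ hxv in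
/-- `Γ`-edges from `x` leaving `A₁` force adjacency to `v`. -/
theorem hxside (c : V) (hc₂ : c ∈ A₂) (hc₁ : c ∉ A₁)
    (h : (cliqueAtOn G A v).Adj x c) : G.Adj v x ∧ G.Adj v c := by
  have hxA : x ∈ A := (hA ▸ Set.subset_union_left : A₁ ⊆ A) hx₁
  have hcA : c ∈ A := (hA ▸ Set.subset_union_right : A₂ ⊆ A) hc₂
  have hx₂ : x ∉ A₂ := fun h2 => hxv (hside' hI x hx₁ h2)
  rcases (cliqueAtOn_adj ..).mp h with h' | ⟨_, _, _, h1, h2⟩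
  · rcases hedge x c hxA hcA h' with ⟨_, hcc⟩ | ⟨hxx, _⟩
    · exact absurd hcc hc₁
    · exact absurd hxx hx₂
  · exact ⟨h1, h2⟩

include hA hI hedge hx₁ hxv in
/-- `G''`-adjacency to `v` follows from `Γ_x`-adjacency to `v`. -/
theorem gaux_v_of_gammax_v (a : V) (ha : a ∈ A)
    (h : (cliqueAtOn (cliqueAtOn G A v) A x).Adj v a) :
    (Gaux G A A₁ A₂ v x).Adj v a := by
  obtain ⟨hne, h'⟩ := (gammax_adj_v hA hI a ha).mp h
  by_cases ha₁ : a ∈ A₁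
  · exact (gaux_adj ..).mpr ⟨hne, Or.inl ⟨hv₁' hI, ha₁, h⟩⟩
  · have ha' : a ∈ A₁ ∪ A₂ := hA.symm ▸ ha
    have ha₂ : a ∈ A₂ := ha'.resolve_left ha₁
    have hGva : G.Adj v a := by
      rcases h' with h' | ⟨h1, h2⟩
      · exact h'
      · exact (hxside hA hI hedge hx₁ hxv a ha₂ ha₁ h2).2
    exact (gaux_adj ..).mpr ⟨hne, Or.inr ⟨hv₂' hI, ha₂, hGva⟩⟩

include hA hI hedge hx₁ hxv in
/-- conversely, `Γ_x`-adjacency to `v` from `G''`-adjacency to `v`. -/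
theorem gammax_v_of_gaux_v (a : V) (ha : a ∈ A)
    (h : (Gaux G A A₁ A₂ v x).Adj v a) :
    (cliqueAtOn (cliqueAtOn G A v) A x).Adj v a := by
  obtain ⟨hne, h'⟩ := (gaux_adj ..).mp h
  rcases h' with ⟨_, _, h'⟩ | ⟨_, _, h'⟩
  · exact h'
  · exact (gammax_adj_v hA hI a ha).mpr ⟨hne, Or.inl h'⟩


include hA hI hedge hx₁ hxv in
/-- THE key identity: `(G_v)_x` agrees on `A` with `(G'')_v`. -/
theorem keyEq : EqOn (cliqueAtOn (cliqueAtOn G A v) A x) (cliqueAtOn (Gaux G A A₁ A₂ v x) A v) A := by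
  have hv₁ := hv₁' hI
  have hv₂ := hv₂' hI
  have liftG2 : ∀ p q : V, G.Adj p q → (cliqueAtOn (cliqueAtOn G A v) A x).Adj p q :=
    fun p q h => (SimpleGraph.sup_adj ..).mpr (Or.inl ((SimpleGraph.sup_adj ..).mpr (Or.inl h)))
  have hGvG'' : ∀ c, c ∈ A → G.Adj v c → (Gaux G A A₁ A₂ v x).Adj v c := by
    intro c hc h
    exact gaux_v_of_gammax_v hA hI hedge hx₁ hxv c hc
      (liftG2 v c h |> fun h' => h' |>.symm.symm)
  intro a b ha hb
  rw [cliqueAtOn_adj (Gaux G A A₁ A₂ v x) A v a b]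
  constructor
  · intro h
    have hne : a ≠ b := h.ne
    by_cases ha₁ : a ∈ A₁ <;> by_cases hb₁ : b ∈ A₁
    · exact Or.inl ((gaux_adj ..).mpr ⟨hne, Or.inl ⟨ha₁, hb₁, h⟩⟩)
    · -- a ∈ A₁, b ∉ A₁ (so b ∈ A₂ \ A₁, b ≠ v)
      have hb₂ : b ∈ A₂ := (hA.symm ▸ hb : b ∈ A₁ ∪ A₂).resolve_left hb₁
      by_cases hav : a = v
      · have hgoal : (Gaux G A A₁ A₂ v x).Adj v b :=
          gaux_v_of_gammax_v hA hI hedge hx₁ hxv b hb (by rw [hav] at h; exact h)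
        rw [hav]
        exact Or.inl hgoal
      · have ha₂ : a ∉ A₂ := fun h2 => hav (hside' hI a ha₁ h2)
        rcases (cliqueAtOn_adj ..).mp h with hG | ⟨_, _, _, hxa, hxb⟩
        · rcases (cliqueAtOn_adj ..).mp hG with hG' | ⟨_, _, _, h1, h2⟩
          · rcases hedge a b ha hb hG' with ⟨_, hbb⟩ | ⟨haa, _⟩
            · exact absurd hbb hb₁
            · exact absurd haa ha₂
          · exact Or.inr ⟨hne, ha, hb, hGvG'' a ha h1, hGvG'' b hb h2⟩
        · obtain ⟨hvx, hvb⟩ := hxside hA hI hedge hx₁ hxv b hb₂ hb₁ hxb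
          refine Or.inr ⟨hne, ha, hb, ?_, hGvG'' b hb hvb⟩
          exact gaux_v_of_gammax_v hA hI hedge hx₁ hxv a ha
            ((gammax_adj_v hA hI a ha).mpr ⟨fun h' => hav h'.symm, Or.inr ⟨hvx, hxa⟩⟩)
    · -- symmetric: a ∉ A₁, b ∈ A₁
      have ha₂ : a ∈ A₂ := (hA.symm ▸ ha : a ∈ A₁ ∪ A₂).resolve_left ha₁
      by_cases hbv : b = v
      · have hgoal : (Gaux G A A₁ A₂ v x).Adj v a :=
          gaux_v_of_gammax_v hA hI hedge hx₁ hxv a ha (by rw [hbv] at h; exact h.symm)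
        rw [hbv]
        exact Or.inl hgoal.symm
      · have hb₂ : b ∉ A₂ := fun h2 => hbv (hside' hI b hb₁ h2)
        rcases (cliqueAtOn_adj ..).mp h with hG | ⟨_, _, _, hxa, hxb⟩
        · rcases (cliqueAtOn_adj ..).mp hG with hG' | ⟨_, _, _, h1, h2⟩
          · rcases hedge a b ha hb hG' with ⟨haa, _⟩ | ⟨_, hbb⟩
            · exact absurd haa ha₁
            · exact absurd hbb hb₂
          · exact Or.inr ⟨hne, ha, hb, hGvG'' a ha h1, hGvG'' b hb h2⟩
        · obtain ⟨hvx, hva⟩ := hxside hA hI hedge hx₁ hxv a ha₂ ha₁ hxa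
          refine Or.inr ⟨hne, ha, hb, hGvG'' a ha hva, ?_⟩
          exact gaux_v_of_gammax_v hA hI hedge hx₁ hxv b hb
            ((gammax_adj_v hA hI b hb).mpr ⟨fun h' => hbv h'.symm, Or.inr ⟨hvx, hxb⟩⟩)
    · -- a, b ∈ A₂ \ A₁
      have ha₂ : a ∈ A₂ := (hA.symm ▸ ha : a ∈ A₁ ∪ A₂).resolve_left ha₁
      have hb₂ : b ∈ A₂ := (hA.symm ▸ hb : b ∈ A₁ ∪ A₂).resolve_left hb₁
      rcases (cliqueAtOn_adj ..).mp h with hG | ⟨_, _, _, hxa, hxb⟩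
      · rcases (cliqueAtOn_adj ..).mp hG with hG' | ⟨_, _, _, h1, h2⟩
        · exact Or.inl ((gaux_adj ..).mpr ⟨hne, Or.inr ⟨ha₂, hb₂, hG'⟩⟩)
        · exact Or.inr ⟨hne, ha, hb, hGvG'' a ha h1, hGvG'' b hb h2⟩
      · obtain ⟨_, hva⟩ := hxside hA hI hedge hx₁ hxv a ha₂ ha₁ hxa
        obtain ⟨_, hvb⟩ := hxside hA hI hedge hx₁ hxv b hb₂ hb₁ hxb
        exact Or.inr ⟨hne, ha, hb, hGvG'' a ha hva, hGvG'' b hb hvb⟩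
  · rintro (h | ⟨hne, _, _, hva, hvb⟩)
    · rcases (gaux_adj ..).mp h with ⟨_, ⟨_, _, h'⟩ | ⟨_, _, h'⟩⟩
      · exact h'
      · exact liftG2 a b h'
    · exact svx hA hI hx₁ a b ha hb
        (gammax_v_of_gaux_v hA hI hedge hx₁ hxv a ha hva)
        (gammax_v_of_gaux_v hA hI hedge hx₁ hxv b hb hvb) hne

include hA hI hedge hx₁ hxv in
/-- The second key identity: `(G'')_v` agrees on `A₁` with `((G₁)_v)_x`. -/
theorem key2 : EqOn (cliqueAtOn (Gaux G A A₁ A₂ v x) A₁ v)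
    (cliqueAtOn (cliqueAtOn G A₁ v) A₁ x) A₁ := by
  have hv₁ := hv₁' hI
  have hsub₁ : A₁ ⊆ A := hA ▸ Set.subset_union_left
  have hshr : EqOn (cliqueAtOn G A v) (cliqueAtOn G A₁ v) A₁ := cliqueAtOn_shrink G hsub₁ v
  have liftG2 : ∀ p q : V, G.Adj p q → (cliqueAtOn (cliqueAtOn G A v) A x).Adj p q :=
    fun p q h => (SimpleGraph.sup_adj ..).mpr (Or.inl ((SimpleGraph.sup_adj ..).mpr (Or.inl h)))
  intro a b ha₁ hb₁
  have ha : a ∈ A := hsub₁ ha₁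
  have hb : b ∈ A := hsub₁ hb₁
  have lhs_iff : (cliqueAtOn (Gaux G A A₁ A₂ v x) A₁ v).Adj a b ↔
      (cliqueAtOn (cliqueAtOn G A v) A x).Adj a b := by
    rw [cliqueAtOn_adj]
    constructor
    · rintro (h | ⟨hne, _, _, hva, hvb⟩)
      · rcases (gaux_adj ..).mp h with ⟨_, ⟨_, _, h'⟩ | ⟨_, _, h'⟩⟩
        · exact h'
        · exact liftG2 a b h'
      · exact svx hA hI hx₁ a b ha hb
          (gammax_v_of_gaux_v hA hI hedge hx₁ hxv a ha hva)
          (gammax_v_of_gaux_v hA hI hedge hx₁ hxv b hb hvb) hne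
    · intro h
      exact Or.inl ((gaux_adj ..).mpr ⟨h.ne, Or.inl ⟨ha₁, hb₁, h⟩⟩)
  rw [lhs_iff, cliqueAtOn_adj (cliqueAtOn G A v) A x a b, cliqueAtOn_adj (cliqueAtOn G A₁ v) A₁ x a b]
  constructor
  · rintro (hG | ⟨hne, _, _, hxa, hxb⟩)
    · exact Or.inl ((hshr a b ha₁ hb₁).mp hG)
    · exact Or.inr ⟨hne, ha₁, hb₁, (hshr x a hx₁ ha₁).mp hxa, (hshr x b hx₁ hb₁).mp hxb⟩
  · rintro (hG | ⟨hne, _, _, hxa, hxb⟩)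
    · exact Or.inl ((hshr a b ha₁ hb₁).mpr hG)
    · exact Or.inr ⟨hne, ha, hb, (hshr x a hx₁ ha₁).mpr hxa, (hshr x b hx₁ hb₁).mpr hxb⟩

end KeyEq

end SUGlue
namespace SUGlue

variable {V : Type u}

section Main

variable [Fintype V] [DecidableEq V]

theorem base_side {Γ' G : SimpleGraph V} {A A₁ A₂ : Set V} {v : V}
    (hA : A₁ ∪ A₂ = A) (hEq : EqOn Γ' (cliqueAtOn G A v) A)
    (hcomp : ∀ a b : ↥A, (Γ'.induce A).Reachable a b → a ≠ b → (Γ'.induce A).Adj a b) :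
    StronglyUnmixedOn (cliqueAtOn G A₁ v) A₁ := by
  have hsub₁ : A₁ ⊆ A := hA ▸ Set.subset_union_left
  have hshr : EqOn (cliqueAtOn G A v) (cliqueAtOn G A₁ v) A₁ := cliqueAtOn_shrink G hsub₁ v
  refine StronglyUnmixedOn.complete _ _ ?_
  intro a b hr hne
  let φ : ((cliqueAtOn G A₁ v).induce A₁) →g (Γ'.induce A) :=
    ⟨fun p => ⟨p.1, hsub₁ p.2⟩, by
      intro p q h
      have h' : (cliqueAtOn G A₁ v).Adj p.1 q.1 := h
      exact (hEq p.1 q.1 (hsub₁ p.2) (hsub₁ q.2)).mpr ((hshr p.1 q.1 p.2 q.2).mpr h')⟩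
  have hrr : (Γ'.induce A).Reachable (φ a) (φ b) := hr.map φ
  have hnev : φ a ≠ φ b := by
    intro h
    exact hne (Subtype.ext (congrArg Subtype.val h : (φ a).1 = (φ b).1))
  have hadj := hcomp (φ a) (φ b) hrr hnev
  have hadj' : Γ'.Adj a.1 b.1 := hadj
  have hΓ : (cliqueAtOn G A v).Adj a.1 b.1 := (hEq a.1 b.1 (hsub₁ a.2) (hsub₁ b.2)).mp hadj'
  exact (hshr a.1 b.1 a.2 b.2).mp hΓ

theorem cut_side {Γ' G : SimpleGraph V} {A A₁ A₂ : Set V} {v x : V}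
    (hA : A₁ ∪ A₂ = A) (hI : A₁ ∩ A₂ = {v})
    (hedge : ∀ a b, a ∈ A → b ∈ A → G.Adj a b → (a ∈ A₁ ∧ b ∈ A₁) ∨ (a ∈ A₂ ∧ b ∈ A₂))
    (hEq : EqOn Γ' (cliqueAtOn G A v) A)
    (hU : UnmixedOn Γ' A) (hx : CutVertexOn Γ' A x) (hx₁ : x ∈ A₁) (hxv : x ≠ v)
    (ih1 : ∀ (G' : SimpleGraph V) (B₁ B₂ : Set V) (w : V), B₁ ∪ B₂ = A \ {x} →
      B₁ ∩ B₂ = {w} →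
      (∀ a b, a ∈ A \ {x} → b ∈ A \ {x} → G'.Adj a b →
        (a ∈ B₁ ∧ b ∈ B₁) ∨ (a ∈ B₂ ∧ b ∈ B₂)) →
      EqOn Γ' (cliqueAtOn G' (A \ {x}) w) (A \ {x}) →
      StronglyUnmixedOn (cliqueAtOn G' B₁ w) B₁ ∧ StronglyUnmixedOn (cliqueAtOn G' B₂ w) B₂)
    (ih2 : ∀ (G' : SimpleGraph V) (B₁ B₂ : Set V) (w : V), B₁ ∪ B₂ = A →
      B₁ ∩ B₂ = {w} →
      (∀ a b, a ∈ A → b ∈ A → G'.Adj a b →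
        (a ∈ B₁ ∧ b ∈ B₁) ∨ (a ∈ B₂ ∧ b ∈ B₂)) →
      EqOn (cliqueAtOn Γ' A x) (cliqueAtOn G' A w) A →
      StronglyUnmixedOn (cliqueAtOn G' B₁ w) B₁ ∧ StronglyUnmixedOn (cliqueAtOn G' B₂ w) B₂)
    (ih3 : ∀ (G' : SimpleGraph V) (B₁ B₂ : Set V) (w : V), B₁ ∪ B₂ = A \ {x} →
      B₁ ∩ B₂ = {w} →
      (∀ a b, a ∈ A \ {x} → b ∈ A \ {x} → G'.Adj a b →
        (a ∈ B₁ ∧ b ∈ B₁) ∨ (a ∈ B₂ ∧ b ∈ B₂)) →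
      EqOn (cliqueAtOn Γ' A x) (cliqueAtOn G' (A \ {x}) w) (A \ {x}) →
      StronglyUnmixedOn (cliqueAtOn G' B₁ w) B₁ ∧ StronglyUnmixedOn (cliqueAtOn G' B₂ w) B₂) :
    StronglyUnmixedOn (cliqueAtOn G A₁ v) A₁ ∧ StronglyUnmixedOn (cliqueAtOn G A₂ v) A₂ := by
  have hv₁ : v ∈ A₁ := hv₁' hI
  have hv₂ : v ∈ A₂ := hv₂' hI
  have hside := hside' hI
  have hsub₁ : A₁ ⊆ A := hA ▸ Set.subset_union_left
  have hsub₂ : A₂ ⊆ A := hA ▸ Set.subset_union_right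
  have hxA : x ∈ A := hx.1
  have hx₂ : x ∉ A₂ := fun h2 => hxv (hside x hx₁ h2)
  have union1 : (A₁ \ {x}) ∪ A₂ = A \ {x} := by
    ext a
    constructor
    · rintro (⟨h1, h2⟩ | h2)
      · exact ⟨hsub₁ h1, h2⟩
      · exact ⟨hsub₂ h2, fun hax => hx₂ ((Set.mem_singleton_iff.mp hax) ▸ h2)⟩
    · rintro ⟨h1, h2⟩
      rcases (hA.symm ▸ h1 : a ∈ A₁ ∪ A₂) with h | h
      · exact Or.inl ⟨h, h2⟩
      · exact Or.inr h
  have inter1 : (A₁ \ {x}) ∩ A₂ = {v} := by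
    ext a
    constructor
    · rintro ⟨⟨h1, _⟩, h2⟩
      exact hside a h1 h2
    · rintro h
      have : a = v := h
      exact ⟨⟨this ▸ hv₁, fun hax => hxv ((Set.mem_singleton_iff.mp hax).symm.trans this)⟩,
        this ▸ hv₂⟩
  have hedge1 : ∀ a b, a ∈ A \ {x} → b ∈ A \ {x} → G.Adj a b →
      (a ∈ A₁ \ {x} ∧ b ∈ A₁ \ {x}) ∨ (a ∈ A₂ ∧ b ∈ A₂) := by
    intro a b ha hb h
    rcases hedge a b ha.1 hb.1 h with ⟨h1, h2⟩ | h'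
    · exact Or.inl ⟨⟨h1, ha.2⟩, ⟨h2, hb.2⟩⟩
    · exact Or.inr h'
  have P1 := ih1 G (A₁ \ {x}) A₂ v union1 inter1 hedge1
    ((hEq.mono Set.diff_subset).trans (cliqueAtOn_shrink G Set.diff_subset v))
  refine ⟨?_, P1.2⟩
  -- the A₁ side, via the cut constructor
  have hedge2 : ∀ a b, a ∈ A → b ∈ A → (Gaux G A A₁ A₂ v x).Adj a b →
      (a ∈ A₁ ∧ b ∈ A₁) ∨ (a ∈ A₂ ∧ b ∈ A₂) := by
    intro a b _ _ h
    rcases (gaux_adj ..).mp h with ⟨_, ⟨h1, h2, _⟩ | ⟨h1, h2, _⟩⟩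
    · exact Or.inl ⟨h1, h2⟩
    · exact Or.inr ⟨h1, h2⟩
  have hedge3 : ∀ a b, a ∈ A \ {x} → b ∈ A \ {x} → (Gaux G A A₁ A₂ v x).Adj a b →
      (a ∈ A₁ \ {x} ∧ b ∈ A₁ \ {x}) ∨ (a ∈ A₂ ∧ b ∈ A₂) := by
    intro a b ha hb h
    rcases hedge2 a b ha.1 hb.1 h with ⟨h1, h2⟩ | h'
    · exact Or.inl ⟨⟨h1, ha.2⟩, ⟨h2, hb.2⟩⟩
    · exact Or.inr h'
  have eq2 : EqOn (cliqueAtOn Γ' A x) (cliqueAtOn (Gaux G A A₁ A₂ v x) A v) A :=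
    (hEq.cliqueAt hxA).trans (keyEq hA hI hedge hx₁ hxv)
  have P2 := ih2 (Gaux G A A₁ A₂ v x) A₁ A₂ v hA hI hedge2 eq2
  have eq3 : EqOn (cliqueAtOn Γ' A x) (cliqueAtOn (Gaux G A A₁ A₂ v x) (A \ {x}) v)
      (A \ {x}) :=
    (eq2.mono Set.diff_subset).trans (cliqueAtOn_shrink _ Set.diff_subset v)
  have P3 := ih3 (Gaux G A A₁ A₂ v x) (A₁ \ {x}) A₂ v union1 inter1 hedge3 eq3
  have hUΓ : UnmixedOn (cliqueAtOn G A v) A := hEq.unmixedOn_iff.mp hU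
  have hU₁ : UnmixedOn (cliqueAtOn G A₁ v) A₁ := unmixedOn_glue hA hI hedge hUΓ
  have hxΓ : CutVertexOn (cliqueAtOn G A v) A x := (hEq.cutVertexOn_iff (le_refl A) x).mp hx
  have hx₁' : CutVertexOn (cliqueAtOn G A₁ v) A₁ x :=
    cutVertexOn_glue' hA hI hedge x hx₁ hxv hxΓ
  have h1' : StronglyUnmixedOn (cliqueAtOn G A₁ v) (A₁ \ {x}) :=
    EqOn.stronglyUnmixedOn P1.1 _ (cliqueAtOn_shrink G (Set.diff_subset : A₁ \ {x} ⊆ A₁) v).symm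
  have h2' : StronglyUnmixedOn (cliqueAtOn (cliqueAtOn G A₁ v) A₁ x) A₁ :=
    EqOn.stronglyUnmixedOn P2.1 _ (key2 hA hI hedge hx₁ hxv)
  have eq4 : EqOn (cliqueAtOn (Gaux G A A₁ A₂ v x) (A₁ \ {x}) v)
      (cliqueAtOn (cliqueAtOn G A₁ v) A₁ x) (A₁ \ {x}) :=
    (cliqueAtOn_shrink _ (Set.diff_subset : A₁ \ {x} ⊆ A₁) v).symm.trans
      ((key2 hA hI hedge hx₁ hxv).mono Set.diff_subset)
  have h3' : StronglyUnmixedOn (cliqueAtOn (cliqueAtOn G A₁ v) A₁ x) (A₁ \ {x}) :=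
    EqOn.stronglyUnmixedOn P3.1 _ eq4
  exact StronglyUnmixedOn.cut _ _ hU₁ x hx₁' h1' h2' h3'

theorem main_glue {Γ' : SimpleGraph V} {A : Set V} (hsu : StronglyUnmixedOn Γ' A) :
    ∀ (G : SimpleGraph V) (A₁ A₂ : Set V) (v : V), A₁ ∪ A₂ = A → A₁ ∩ A₂ = {v} →
      (∀ a b, a ∈ A → b ∈ A → G.Adj a b → (a ∈ A₁ ∧ b ∈ A₁) ∨ (a ∈ A₂ ∧ b ∈ A₂)) →
      EqOn Γ' (cliqueAtOn G A v) A →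
      StronglyUnmixedOn (cliqueAtOn G A₁ v) A₁ ∧
        StronglyUnmixedOn (cliqueAtOn G A₂ v) A₂ := by
  induction hsu with
  | complete Γ' A hcomp =>
    intro G A₁ A₂ v hA hI hedge hEq
    refine ⟨base_side hA hEq hcomp, ?_⟩
    exact base_side (by rw [Set.union_comm]; exact hA) hEq hcomp
  | cut Γ' A hU x hx h1 h2 h3 ih1 ih2 ih3 =>
    intro G A₁ A₂ v hA hI hedge hEq
    have hxΓ : CutVertexOn (cliqueAtOn G A v) A x := (hEq.cutVertexOn_iff (le_refl A) x).mp hx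
    have hxv : x ≠ v := by
      intro h
      rw [h] at hxΓ
      exact not_cutVertexOn_cliqueAtOn (le_refl A) hxΓ
    have hxA : x ∈ A := hx.1
    rcases (hA.symm ▸ hxA : x ∈ A₁ ∪ A₂) with hx₁ | hx₂
    · exact cut_side hA hI hedge hEq hU hx hx₁ hxv ih1 ih2 ih3
    · have hA' : A₂ ∪ A₁ = A := by rw [Set.union_comm]; exact hA
      have hI' : A₂ ∩ A₁ = {v} := by rw [Set.inter_comm]; exact hI
      have hedge' : ∀ a b, a ∈ A → b ∈ A → G.Adj a b →
          (a ∈ A₂ ∧ b ∈ A₂) ∨ (a ∈ A₁ ∧ b ∈ A₁) :=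
        fun a b ha hb h => (hedge a b ha hb h).symm
      exact (cut_side hA' hI' hedge' hEq hU hx hx₂ hxv ih1 ih2 ih3).symm

end Main

end SUGlue
/-- for `G = G₁ ∪ G₂` with `V(G₁) ∩ V(G₂) = {v}`, if `J_{G_v}` is
strongly unmixed, then `J_{(G₁)_v}` and `J_{(G₂)_v}` are strongly unmixed. -/
theorem stronglyUnmixed_cliqueAt_of_union {V : Type u} [Fintype V] [DecidableEq V]
    (G : SimpleGraph V) (A₁ A₂ : Set V) (v : V)
    (hunion : A₁ ∪ A₂ = Set.univ) (hinter : A₁ ∩ A₂ = {v})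
    (hedge : ∀ a b : V, G.Adj a b → (a ∈ A₁ ∧ b ∈ A₁) ∨ (a ∈ A₂ ∧ b ∈ A₂))
    (hsu : StronglyUnmixedOn (cliqueAtOn G Set.univ v) Set.univ) :
    StronglyUnmixedOn (cliqueAtOn G A₁ v) A₁ ∧
      StronglyUnmixedOn (cliqueAtOn G A₂ v) A₂ := by
  exact SUGlue.main_glue hsu G A₁ A₂ v hunion hinter
    (fun a b _ _ h => hedge a b h) (SUGlue.EqOn.refl _ _)
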